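/- arXiv:2209.03023 — 3 statements merged into one kernel-verified Lean document; each statement's English description precedes it below -/
import Mathlib

section
/- For Re(s) > 0 large enough, the Lucas zeta function satisfies the identity ζ_U(s) = Σ_{n=1}^∞ U_n^{−s} = D^{s/2} Σ_{k=0}^∞ binom(−s, k) (−1)^k · a^{−s−k} b^k / (1 − a^{−s−k} b^k), where D = (a − b)² and binom(−s,k) denotes the generalized binomial coefficient. -/
open Complex

/-- The generalized binomial coefficient `binom(-s, k)`. -/
noncomputable def genBinomNeg (s : ℂ) (k : ℕ) : ℂ :=
  (∏ j ∈ Finset.range k, (-s - j)) / (k.factorial : ℂ)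

private lemma ofReal_pow_cpow {x : ℝ} (hx : 0 ≤ x) (w : ℂ) (n : ℕ) :
    (((x ^ n : ℝ)) : ℂ) ^ w = ((x : ℂ) ^ w) ^ n := by
  induction n with
  | zero => simp
  | succ n ih =>
    rw [pow_succ, Complex.ofReal_mul,
      mul_cpow_ofReal_nonneg (pow_nonneg hx n) hx, ih, pow_succ]

private lemma binom_hasSum (s : ℂ) {z : ℂ} (hz : ‖z‖ < 1) :
    HasSum (fun k : ℕ => genBinomNeg s k * (-1) ^ k * z ^ k) ((1 - z) ^ (-s)) := by
  set f : ℂ → ℂ := fun x => (1 - x) ^ (-s) with hf_def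
  have hslit : ∀ x ∈ Metric.ball (0 : ℂ) 1, (1 - x) ∈ Complex.slitPlane := by
    intro x hx
    refine Or.inl ?_
    have hx' : ‖x‖ < 1 := by simpa [mem_ball_zero_iff] using hx
    have : x.re ≤ ‖x‖ := (abs_le.mp (Complex.abs_re_le_norm x)).2
    simp only [Complex.sub_re, Complex.one_re]
    linarith
  have hf : DifferentiableOn ℂ f (Metric.ball (0 : ℂ) 1) := by
    intro x hx
    exact (((differentiableAt_const (1 : ℂ)).sub differentiableAt_id).cpow
      (differentiableAt_const _) (hslit x hx)).differentiableWithinAt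
  have hiter : ∀ (k : ℕ), ∀ x ∈ Metric.ball (0 : ℂ) 1,
      iteratedDeriv k f x
        = (∏ j ∈ Finset.range k, (-s - j)) * (-1) ^ k * (1 - x) ^ (-s - k) := by
    intro k
    induction k with
    | zero => intro x _; simp [f]
    | succ k ih =>
      intro x hx
      rw [iteratedDeriv_succ]
      have hev : iteratedDeriv k f =ᶠ[nhds x]
          fun y => (∏ j ∈ Finset.range k, (-s - j)) * (-1) ^ k * (1 - y) ^ (-s - k) :=
        Filter.eventuallyEq_of_mem (Metric.isOpen_ball.mem_nhds hx) ih
      rw [hev.deriv_eq]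
      have hd : HasDerivAt (fun y : ℂ => (1 - y) ^ (-s - (k : ℂ)))
          ((-s - k) * (1 - x) ^ (-s - (k : ℂ) - 1) * (0 - 1)) x :=
        HasDerivAt.cpow_const ((hasDerivAt_const x (1 : ℂ)).sub (hasDerivAt_id x)) (hslit x hx)
      rw [(hd.const_mul ((∏ j ∈ Finset.range k, (-s - j)) * (-1) ^ k)).deriv]
      have he : -s - (k : ℂ) - 1 = -s - ((k + 1 : ℕ) : ℂ) := by push_cast; ring
      rw [he, Finset.prod_range_succ]
      push_cast
      ring
  have hz1 : z ∈ Metric.ball (0 : ℂ) 1 := by simpa [mem_ball_zero_iff] using hz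
  have H := Complex.hasSum_taylorSeries_on_ball hf hz1
  have hfun : (fun k : ℕ => (k.factorial : ℂ)⁻¹ • (z - 0) ^ k • iteratedDeriv k f 0)
      = fun k : ℕ => genBinomNeg s k * (-1) ^ k * z ^ k := by
    funext k
    rw [hiter k 0 (by simp)]
    simp only [sub_zero, smul_eq_mul, genBinomNeg, Complex.one_cpow]
    rw [div_eq_mul_inv]
    ring
  rw [hfun] at H
  exact H

private lemma summable_binom_abs (s : ℂ) {x : ℝ} (hx0 : 0 ≤ x) (hx1 : x < 1) :
    Summable (fun k : ℕ => ‖genBinomNeg s k‖ * x ^ k) := by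
  have hz : ‖((x : ℂ))‖ < 1 := by
    simpa [Complex.norm_real, _root_.abs_of_nonneg hx0] using hx1
  have H := (binom_hasSum ((‖s‖ : ℂ)) hz).summable
  have hfun : ∀ k : ℕ, genBinomNeg ((‖s‖ : ℂ)) k * (-1) ^ k * ((x : ℂ)) ^ k
      = (((∏ j ∈ Finset.range k, (‖s‖ + j)) / k.factorial * x ^ k : ℝ) : ℂ) := by
    intro k
    have hprod : (∏ j ∈ Finset.range k, (-(‖s‖ : ℂ) - j))
        = (-1) ^ k * ∏ j ∈ Finset.range k, ((‖s‖ : ℂ) + j) := by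
      calc (∏ j ∈ Finset.range k, (-(‖s‖ : ℂ) - j))
          = ∏ j ∈ Finset.range k, ((-1) * ((‖s‖ : ℂ) + j)) :=
            Finset.prod_congr rfl fun j _ => by ring
        _ = (-1) ^ k * ∏ j ∈ Finset.range k, ((‖s‖ : ℂ) + j) := by
            rw [Finset.prod_mul_distrib, Finset.prod_const, Finset.card_range]
    unfold genBinomNeg
    have hone : ((-1 : ℂ)) ^ k * (-1) ^ k = 1 := by
      rw [← mul_pow]; norm_num
    have key : ∀ P X F : ℂ, (-1) ^ k * P * (-1) ^ k * X / F = P * X / F := by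
      intro P X F
      rw [show (-1 : ℂ) ^ k * P * (-1) ^ k * X = ((-1) ^ k * (-1) ^ k) * (P * X) from by ring,
        hone, one_mul]
    rw [hprod]
    push_cast
    field_simp
    rw [sq, hone, one_mul]
  have Hg : Summable (fun k : ℕ =>
      (((∏ j ∈ Finset.range k, (‖s‖ + j)) / k.factorial * x ^ k : ℝ) : ℂ)) :=
    H.congr hfun
  have Hr : Summable (fun k : ℕ =>
      (∏ j ∈ Finset.range k, (‖s‖ + j)) / k.factorial * x ^ k) :=
    Complex.summable_ofReal.mp Hg
  refine Hr.of_nonneg_of_le (fun k => mul_nonneg (norm_nonneg _) (pow_nonneg hx0 k)) ?_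
  intro k
  have hb : ‖genBinomNeg s k‖ ≤ (∏ j ∈ Finset.range k, (‖s‖ + j)) / k.factorial := by
    unfold genBinomNeg
    rw [norm_div, norm_prod]
    have h1 : ‖((k.factorial : ℕ) : ℂ)‖ = (k.factorial : ℝ) := by
      simp
    rw [h1]
    have h2 : ∏ j ∈ Finset.range k, ‖-s - (j : ℂ)‖ ≤ ∏ j ∈ Finset.range k, (‖s‖ + j) := by
      refine Finset.prod_le_prod (fun j _ => norm_nonneg _) (fun j _ => ?_)
      have hj' : -s - (j : ℂ) = -(s + j) := by ring
      rw [hj', norm_neg]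
      refine (norm_add_le _ _).trans ?_
      simp
    exact div_le_div_of_nonneg_right h2 (by positivity)
  exact mul_le_mul_of_nonneg_right hb (pow_nonneg hx0 k)

set_option maxHeartbeats 1000000 in
theorem lucas_zeta_kamano_expansion (a b : ℝ) (ha : 1 < a) (hb : |b| < a) (hb0 : 0 < |b|)
    (D : ℝ) (hD : D = (a - b) ^ 2) :
    ∃ σ₀ : ℝ, ∀ s : ℂ, σ₀ < s.re →
      ∑' n : ℕ, (((a ^ (n + 1) - b ^ (n + 1)) / (a - b) : ℝ) : ℂ) ^ (-s) =
        (D : ℂ) ^ (s / 2) * ∑' k : ℕ, genBinomNeg s k * (-1) ^ k *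
          ((a : ℂ) ^ (-s - k) * (b : ℂ) ^ (k : ℕ)) /
          (1 - (a : ℂ) ^ (-s - k) * (b : ℂ) ^ (k : ℕ)) := by
  refine ⟨0, fun s hs => ?_⟩
  have ha0 : (0:ℝ) < a := lt_trans one_pos ha
  have hab : (0:ℝ) < a - b := sub_pos.mpr (lt_of_le_of_lt (le_abs_self b) hb)
  have hA0 : (a:ℂ) ≠ 0 := by exact_mod_cast ha0.ne'
  have hAB0 : ((a - b : ℝ):ℂ) ≠ 0 := by exact_mod_cast hab.ne'
  have hq0 : (0:ℝ) ≤ |b| / a := div_nonneg (abs_nonneg b) ha0.le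
  have hq1 : |b| / a < 1 := (div_lt_one ha0).mpr hb
  have hσ0 : 0 < s.re := hs
  set t : ℝ := a ^ (-s.re) with ht
  have ht0 : 0 < t := Real.rpow_pos_of_pos ha0 _
  have ht1 : t < 1 := Real.rpow_lt_one_of_one_lt_of_neg ha (neg_lt_zero.mpr hσ0)
  set r : ℕ → ℂ := fun k => (a:ℂ) ^ (-s - (k:ℂ)) * (b:ℂ) ^ k with hr
  have hr_eq : ∀ k : ℕ, r k = (a:ℂ) ^ (-s) * ((b:ℂ)/(a:ℂ)) ^ k := by
    intro k
    show (a:ℂ) ^ (-s - (k:ℂ)) * (b:ℂ) ^ k = _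
    rw [show -s - (k:ℂ) = -s + (-(k:ℂ)) from by ring, Complex.cpow_add _ _ hA0,
      Complex.cpow_neg (a:ℂ) (k:ℂ), Complex.cpow_natCast, div_pow, mul_assoc,
      inv_mul_eq_div]
  have hnorm_r : ∀ k : ℕ, ‖r k‖ = t * (|b|/a) ^ k := by
    intro k
    rw [hr_eq k, norm_mul, norm_pow]
    have h1 : ‖(a:ℂ) ^ (-s)‖ = t := by
      rw [Complex.norm_cpow_eq_rpow_re_of_pos ha0]
      simp [ht]
    have h2 : ‖(b:ℂ)/(a:ℂ)‖ = |b|/a := by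
      rw [norm_div]
      simp [Complex.norm_real, Real.norm_eq_abs, _root_.abs_of_pos ha0]
    rw [h1, h2]
  have hr_lt : ∀ k : ℕ, ‖r k‖ < 1 := by
    intro k
    rw [hnorm_r k]
    calc t * (|b|/a) ^ k ≤ t * 1 :=
          mul_le_mul_of_nonneg_left (pow_le_one₀ hq0 hq1.le) ht0.le
      _ < 1 := by rwa [mul_one]
  set Cab : ℂ := ((a - b : ℝ) : ℂ) ^ s with hCab
  set F : ℕ → ℕ → ℂ := fun n k => Cab * (genBinomNeg s k * (-1)^k) * r k ^ (n+1) with hF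
  have key : ∀ n : ℕ, HasSum (fun k => F n k)
      ((((a ^ (n+1) - b ^ (n+1)) / (a - b) : ℝ) : ℂ) ^ (-s)) := by
    intro n
    have habs1 : |(b/a) ^ (n+1)| < 1 := by
      rw [_root_.abs_pow, _root_.abs_div, _root_.abs_of_pos ha0]
      exact pow_lt_one₀ hq0 hq1 n.succ_ne_zero
    have hvpos : 0 < 1 - (b/a) ^ (n+1) := by
      have h2 := (abs_lt.mp habs1).2
      linarith
    have hfactor : (a ^ (n+1) - b ^ (n+1)) / (a - b)
        = (a - b)⁻¹ * (a ^ (n+1) * (1 - (b/a) ^ (n+1))) := by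
      field_simp
      rw [div_pow]
      field_simp
    have hP1 : (((a - b)⁻¹ : ℝ) : ℂ) ^ (-s) = Cab := by
      rw [Complex.ofReal_inv, Complex.inv_cpow _ _
        (by rw [Complex.arg_ofReal_of_nonneg hab.le]; exact Real.pi_ne_zero.symm),
        Complex.cpow_neg, inv_inv, hCab]
    have hP2 : (((a ^ (n+1) : ℝ)) : ℂ) ^ (-s) = ((a:ℂ) ^ (-s)) ^ (n+1) :=
      ofReal_pow_cpow ha0.le (-s) (n+1)
    have hz : ‖(((b/a) ^ (n+1) : ℝ) : ℂ)‖ < 1 := by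
      rw [Complex.norm_real, Real.norm_eq_abs]
      exact habs1
    have hP3 := binom_hasSum s hz
    have hzz : (1 : ℂ) - (((b/a) ^ (n+1) : ℝ) : ℂ) = (((1 - (b/a) ^ (n+1) : ℝ)) : ℂ) := by
      push_cast
      ring
    rw [hzz] at hP3
    have H := hP3.mul_left (Cab * ((a:ℂ) ^ (-s)) ^ (n+1))
    have hterm : ∀ k : ℕ, Cab * ((a:ℂ) ^ (-s)) ^ (n+1)
        * (genBinomNeg s k * (-1:ℂ)^k * ((((b/a) ^ (n+1) : ℝ)) : ℂ) ^ k) = F n k := by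
      intro k
      have hz2 : ((((b/a) ^ (n+1) : ℝ)) : ℂ) ^ k = (((b:ℂ)/(a:ℂ)) ^ k) ^ (n+1) := by
        push_cast
        rw [← pow_mul, ← pow_mul, Nat.mul_comm]
      show _ = Cab * (genBinomNeg s k * (-1:ℂ)^k) * r k ^ (n+1)
      rw [hz2, hr_eq k, mul_pow]
      ring
    have hgoal : (((a ^ (n+1) - b ^ (n+1)) / (a - b) : ℝ) : ℂ) ^ (-s)
        = Cab * ((a:ℂ) ^ (-s)) ^ (n+1) * ((((1 - (b/a) ^ (n+1) : ℝ))) : ℂ) ^ (-s) := by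
      rw [hfactor, Complex.ofReal_mul, mul_cpow_ofReal_nonneg (inv_nonneg.mpr hab.le)
        (mul_nonneg (pow_nonneg ha0.le _) hvpos.le), Complex.ofReal_mul,
        mul_cpow_ofReal_nonneg (pow_nonneg ha0.le _) hvpos.le, hP1, hP2]
      ring
    rw [hgoal]
    exact (funext hterm) ▸ H
  have habs : ∀ p : ℕ × ℕ, ‖Function.uncurry F p‖
      ≤ (‖Cab‖ * t ^ (p.1+1)) * (‖genBinomNeg s p.2‖ * (|b|/a) ^ p.2) := by
    rintro ⟨n, k⟩
    show ‖Cab * (genBinomNeg s k * (-1:ℂ)^k) * r k ^ (n+1)‖ ≤ _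
    rw [norm_mul, norm_mul, norm_pow, hnorm_r k]
    have h1 : ‖(-1:ℂ)^k‖ = 1 := by
      rw [norm_pow, norm_neg, norm_one, one_pow]
    rw [norm_mul, h1, mul_one, mul_pow]
    have h2 : ((|b|/a) ^ k) ^ (n+1) ≤ (|b|/a) ^ k := by
      rw [← pow_mul]
      exact pow_le_pow_of_le_one hq0 hq1.le (Nat.le_mul_of_pos_right k n.succ_pos)
    have h3 : ‖Cab‖ * ‖genBinomNeg s k‖ * (t ^ (n+1) * ((|b|/a) ^ k) ^ (n+1))
        = (‖Cab‖ * t ^ (n+1)) * (‖genBinomNeg s k‖ * ((|b|/a) ^ k) ^ (n+1)) := by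
      ring
    rw [h3]
    gcongr
  have hgsum : Summable (fun p : ℕ × ℕ =>
      (‖Cab‖ * t ^ (p.1+1)) * (‖genBinomNeg s p.2‖ * (|b|/a) ^ p.2)) := by
    have hf1 : Summable (fun n : ℕ => ‖Cab‖ * t ^ (n+1)) :=
      ((summable_geometric_of_lt_one ht0.le ht1).mul_left (‖Cab‖ * t)).congr
        fun n => by rw [pow_succ']; ring
    exact Summable.mul_of_nonneg (f := fun n : ℕ => ‖Cab‖ * t ^ (n+1))
      (g := fun k : ℕ => ‖genBinomNeg s k‖ * (|b|/a) ^ k) hf1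
      (summable_binom_abs s hq0 hq1) (fun n => by positivity) (fun k => by positivity)
  have hFsum : Summable (Function.uncurry F) :=
    Summable.of_norm_bounded hgsum habs
  have hgeo : ∀ k : ℕ, HasSum (fun n : ℕ => r k ^ (n+1)) (r k / (1 - r k)) := by
    intro k
    have h2 := (hasSum_geometric_of_norm_lt_one (hr_lt k)).mul_left (r k)
    have h3 : (fun n : ℕ => r k * r k ^ n) = fun n => r k ^ (n+1) :=
      funext fun n => (pow_succ' _ _).symm
    rw [h3, ← div_eq_mul_inv] at h2
    exact h2
  have hinner : ∀ k : ℕ, ∑' n, F n k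
      = Cab * (genBinomNeg s k * (-1)^k) * (r k / (1 - r k)) := by
    intro k
    have h := ((hgeo k).mul_left (Cab * (genBinomNeg s k * (-1)^k))).tsum_eq
    rw [← h]
  have hDC : ((D : ℝ) : ℂ) ^ (s/2) = Cab := by
    rw [hD, ofReal_pow_cpow hab.le (s/2) 2, sq, ← Complex.cpow_add _ _ hAB0, add_halves,
      hCab]
  calc ∑' n : ℕ, (((a ^ (n + 1) - b ^ (n + 1)) / (a - b) : ℝ) : ℂ) ^ (-s)
      = ∑' n, ∑' k, F n k := tsum_congr fun n => ((key n).tsum_eq).symm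
    _ = ∑' k, ∑' n, F n k := (Summable.tsum_comm hFsum).symm
    _ = ∑' k, Cab * (genBinomNeg s k * (-1)^k) * (r k / (1 - r k)) :=
        tsum_congr fun k => hinner k
    _ = Cab * ∑' k, genBinomNeg s k * (-1)^k * (r k / (1 - r k)) := by
        rw [← tsum_mul_left]
        exact tsum_congr fun k => by ring
    _ = ((D : ℝ) : ℂ) ^ (s/2) * ∑' k : ℕ, genBinomNeg s k * (-1) ^ k *
          ((a : ℂ) ^ (-s - k) * (b : ℂ) ^ (k : ℕ)) /
          (1 - (a : ℂ) ^ (-s - k) * (b : ℂ) ^ (k : ℕ)) := by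
        rw [hDC]
        refine congrArg _ (tsum_congr fun k => ?_)
        exact (mul_div_assoc _ _ _).symm
end

section
/- Let a > 1, 0 < |b| < a, D = (a−b)², Q = ab > 0, and suppose b = a^{−p/q} for coprime positive integers p, q. Then for k = q k₁ (k₁ ∈ ℕ) and ℓ = k(1 + p/q) ∈ ℕ, the function Z(s) := D^{s/2} binom(−s, k)(−1)^k a^{−s−k} b^k/(1 − a^{−s−k}b^k) has a simple pole at s = −ℓ with residue D^{−ℓ/2} binom(ℓ, k) (−1)^k / log a. -/
theorem lucas_zeta_term_simple_pole (a b : ℝ) (ha : 1 < a) (hb : |b| < a) (hb0 : 0 < |b|)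
    (D : ℝ) (hD : D = (a - b) ^ 2) (hQ : 0 < a * b)
    (p q : ℕ) (hp : 0 < p) (hq : 0 < q) (hpq : Nat.Coprime p q)
    (hbval : b = a ^ (-(p / q : ℝ)))
    (k₁ k ℓ : ℕ) (hk₁ : 0 < k₁) (hk : k = q * k₁)
    (hℓ : (ℓ : ℝ) = k * (1 + (p : ℝ) / q))
    (Z : ℂ → ℂ)
    (hZ : ∀ s : ℂ, Z s = (D : ℂ) ^ (s / 2) * genBinomNeg s k * (-1) ^ k *
      ((a : ℂ) ^ (-s - k) * (b : ℂ) ^ k) / (1 - (a : ℂ) ^ (-s - k) * (b : ℂ) ^ k)) :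
    Filter.Tendsto (fun s : ℂ => (s + ℓ) * Z s) (nhdsWithin (-(ℓ : ℂ)) {(-(ℓ : ℂ))}ᶜ)
      (nhds ((D : ℂ) ^ (-(ℓ : ℂ) / 2) * (ℓ.choose k) * (-1) ^ k / (Real.log a : ℂ))) := by
  have ha0 : (0:ℝ) < a := lt_trans one_pos ha
  have hbpos : 0 < b := by rw [hbval]; exact Real.rpow_pos_of_pos ha0 _
  have hD0 : (0:ℝ) < D := by
    rw [hD]
    have h1 : b < a := lt_of_le_of_lt (le_abs_self b) hb
    have h2 : 0 < a - b := by linarith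
    positivity
  have hq0 : (q:ℝ) ≠ 0 := Nat.cast_ne_zero.mpr hq.ne'
  have hkl : k ≤ ℓ := by
    have : (k:ℝ) ≤ (ℓ:ℝ) := by
      rw [hℓ]
      nlinarith [Nat.cast_nonneg (α := ℝ) k,
        div_nonneg (Nat.cast_nonneg (α := ℝ) p) (Nat.cast_nonneg (α := ℝ) q)]
    exact_mod_cast this
  set L : ℂ := (Real.log a : ℂ) with hL
  have hLne : L ≠ 0 := by
    simp only [hL, Complex.ofReal_ne_zero]
    exact (Real.log_pos ha).ne'
  -- real key identity
  have hreal : a ^ ((ℓ:ℝ) - k) * b ^ k = 1 := by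
    have hbk : b ^ k = a ^ (-((p:ℝ) / q) * k) := by
      rw [hbval, ← Real.rpow_natCast (a ^ (-((p:ℝ) / q))) k, ← Real.rpow_mul ha0.le]
    rw [hbk, ← Real.rpow_add ha0]
    have : (ℓ:ℝ) - k + -((p:ℝ) / q) * k = 0 := by
      rw [hℓ]; field_simp; ring
    rw [this, Real.rpow_zero]
  have haC : (a:ℂ) ≠ 0 := Complex.ofReal_ne_zero.mpr ha0.ne'
  set w : ℂ → ℂ := fun s => (a:ℂ) ^ (-s - (k:ℂ)) * (b:ℂ) ^ k with hw
  have hw1 : w (-(ℓ:ℂ)) = 1 := by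
    have h1 : ((a ^ ((ℓ:ℝ) - k) : ℝ) : ℂ) = (a:ℂ) ^ (((ℓ:ℝ) - k : ℝ) : ℂ) :=
      Complex.ofReal_cpow ha0.le _
    have h2 : (((ℓ:ℝ) - k : ℝ) : ℂ) = -(-(ℓ:ℂ)) - (k:ℂ) := by push_cast; ring
    simp only [hw]
    calc (a:ℂ) ^ (-(-(ℓ:ℂ)) - (k:ℂ)) * (b:ℂ) ^ k
        = ((a ^ ((ℓ:ℝ) - k) : ℝ) : ℂ) * ((b ^ k : ℝ) : ℂ) := by
          rw [h1, h2]; push_cast; ring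
      _ = ((a ^ ((ℓ:ℝ) - k) * b ^ k : ℝ) : ℂ) := by push_cast; ring
      _ = 1 := by rw [hreal]; norm_num
  -- express w via exp
  have hwexp : ∀ s : ℂ, w s = Complex.exp (L * (-s - (k:ℂ))) * (b:ℂ) ^ k := by
    intro s
    simp only [hw]
    rw [Complex.cpow_def_of_ne_zero haC, hL, Complex.ofReal_log ha0.le]
  set F : ℂ → ℂ := fun s => 1 - w s with hF
  have hF0 : F (-(ℓ:ℂ)) = 0 := by simp [hF, hw1]
  -- derivative of F at -ℓ is L
  have hder : HasDerivAt F L (-(ℓ:ℂ)) := by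
    have hu : HasDerivAt (fun s : ℂ => L * (-s - (k:ℂ))) (-L) (-(ℓ:ℂ)) := by
      simpa using ((hasDerivAt_id (-(ℓ:ℂ))).neg.sub_const (k:ℂ)).const_mul L
    have hexp := hu.cexp
    have h3 := (hexp.mul_const ((b:ℂ) ^ k)).const_sub 1
    have hkey : Complex.exp (L * (-(-(ℓ:ℂ)) - (k:ℂ))) * (b:ℂ) ^ k = 1 := by
      rw [← hwexp]; exact hw1
    have hFe : F = fun s => 1 - Complex.exp (L * (-s - (k:ℂ))) * (b:ℂ) ^ k := by
      funext s; simp [hF, hwexp s]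
    rw [hFe]
    refine h3.congr_deriv ?_
    have : Complex.exp (L * (-(-(ℓ:ℂ)) - (k:ℂ))) * -L * (b:ℂ) ^ k
        = -L * (Complex.exp (L * (-(-(ℓ:ℂ)) - (k:ℂ))) * (b:ℂ) ^ k) := by ring
    rw [this, hkey]; ring
  have hslope : Filter.Tendsto (fun s => (slope F (-(ℓ:ℂ)) s)⁻¹)
      (nhdsWithin (-(ℓ:ℂ)) {(-(ℓ:ℂ))}ᶜ) (nhds L⁻¹) :=
    (hasDerivAt_iff_tendsto_slope.mp hder).inv₀ hLne
  -- numerator continuity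
  set N : ℂ → ℂ := fun s => (D:ℂ) ^ (s / 2) * genBinomNeg s k * (-1) ^ k * w s with hN
  have hDC : (D:ℂ) ≠ 0 := Complex.ofReal_ne_zero.mpr hD0.ne'
  have c1 : ContinuousAt (fun s : ℂ => (D:ℂ) ^ (s / 2)) (-(ℓ:ℂ)) := by
    exact (continuousAt_const_cpow hDC).comp
      ((continuous_id.div_const 2).continuousAt)
  have c2 : ContinuousAt (fun s : ℂ => genBinomNeg s k) (-(ℓ:ℂ)) := by
    apply ContinuousAt.div_const
    exact (continuous_finset_prod _ fun j _ => (continuous_neg.sub continuous_const)).continuousAt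
  have c3 : ContinuousAt w (-(ℓ:ℂ)) := by
    apply ContinuousAt.mul _ continuousAt_const
    exact (continuousAt_const_cpow haC).comp
      ((continuous_neg.sub continuous_const).continuousAt)
  have cN : ContinuousAt N (-(ℓ:ℂ)) := ((c1.mul c2).mul continuousAt_const).mul c3
  -- value of genBinomNeg at -ℓ
  have hgb : genBinomNeg (-(ℓ:ℂ)) k = (ℓ.choose k : ℂ) := by
    unfold genBinomNeg
    have hprod : (∏ j ∈ Finset.range k, (-(-(ℓ:ℂ)) - (j:ℂ))) = ((ℓ.descFactorial k : ℕ) : ℂ) := by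
      rw [Nat.descFactorial_eq_prod_range, Nat.cast_prod]
      apply Finset.prod_congr rfl
      intro j hj
      have hjk : j < k := Finset.mem_range.mp hj
      have : j ≤ ℓ := le_trans hjk.le hkl
      rw [Nat.cast_sub this]; ring
    rw [hprod, Nat.descFactorial_eq_factorial_mul_choose, Nat.cast_mul, mul_comm,
      mul_div_assoc, div_self (Nat.cast_ne_zero.mpr (Nat.factorial_ne_zero k)), mul_one]
  have hNval : N (-(ℓ:ℂ)) = (D:ℂ) ^ (-(ℓ:ℂ) / 2) * (ℓ.choose k : ℂ) * (-1) ^ k := by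
    simp only [hN, hw1, hgb, mul_one]
  -- combine
  have hmain : Filter.Tendsto (fun s => N s * (slope F (-(ℓ:ℂ)) s)⁻¹)
      (nhdsWithin (-(ℓ:ℂ)) {(-(ℓ:ℂ))}ᶜ) (nhds (N (-(ℓ:ℂ)) * L⁻¹)) :=
    (cN.tendsto.mono_left nhdsWithin_le_nhds).mul hslope
  have heq : ∀ s : ℂ, (s + (ℓ:ℂ)) * Z s = N s * (slope F (-(ℓ:ℂ)) s)⁻¹ := by
    intro s
    rw [hZ s]
    have hs : slope F (-(ℓ:ℂ)) s = F s / (s + (ℓ:ℂ)) := by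
      rw [slope_def_field, hF0, sub_zero, sub_neg_eq_add]
    rw [hs, inv_div]
    simp only [hN, hF, hw]
    ring
  rw [show ((D:ℂ) ^ (-(ℓ:ℂ) / 2) * (ℓ.choose k : ℂ) * (-1) ^ k / L)
      = N (-(ℓ:ℂ)) * L⁻¹ by rw [hNval, div_eq_mul_inv]]
  exact hmain.congr (fun s => (heq s).symm)
end

section
/- With notation as in the previous statement (a > 1, b = a^{−p/q}, Q = ab > 0, k = q k₁, ℓ = k(1+p/q) ∈ ℕ), the constant term of the Laurent expansion at s = −ℓ of the function Z(s) = D^{s/2} binom(−s,k)(−1)^k a^{−s−k}b^k/(1 − a^{−s−k}b^k) equals D^{−ℓ/2} binom(ℓ,k) (−1)^k [ (log D − log a)/(2 log a) + (H_{ℓ−k} − H_ℓ)/log a ], where H_n = Σ_{j=1}^n 1/j and H_0 = 0. -/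
open Filter Finset Complex

noncomputable def expAux (z : ℂ) : ℂ := ∑' n : ℕ, z ^ n / ((n + 2).factorial : ℂ)

lemma summable_shift (z : ℂ) (m : ℕ) :
    Summable (fun n : ℕ => z ^ n / ((n + m).factorial : ℂ)) := by
  apply Summable.of_norm_bounded (Real.summable_pow_div_factorial ‖z‖)
  intro n
  rw [norm_div, norm_pow]
  have h1 : ‖((n + m).factorial : ℂ)‖ = ((n + m).factorial : ℝ) := by
    simp
  rw [h1]
  gcongr
  omega

lemma exp_eq_expAux (z : ℂ) : Complex.exp z = 1 + z + z ^ 2 * expAux z := by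
  have hs : Summable (fun n : ℕ => z ^ n / (n.factorial : ℂ)) :=
    NormedSpace.expSeries_div_summable z
  have h0 : Complex.exp z = ∑' n : ℕ, z ^ n / (n.factorial : ℂ) := by
    rw [Complex.exp_eq_exp_ℂ, NormedSpace.exp_eq_tsum_div]
  rw [h0, ← Summable.sum_add_tsum_nat_add 2 hs]
  have h1 : ∑' n : ℕ, z ^ (n + 2) / ((n + 2).factorial : ℂ) = z ^ 2 * expAux z := by
    rw [expAux, ← tsum_mul_left]
    exact tsum_congr fun n => by rw [pow_add]; ring
  rw [h1]
  simp [Finset.sum_range_succ]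

lemma tendsto_expAux : Tendsto expAux (nhds 0) (nhds (2⁻¹ : ℂ)) := by
  have key : ∀ z : ℂ, expAux z - 2⁻¹ = z * ∑' n : ℕ, z ^ n / ((n + 3).factorial : ℂ) := by
    intro z
    have hs := summable_shift z 2
    have h2 := (Summable.sum_add_tsum_nat_add 1 hs).symm
    have h3 : ∑' n : ℕ, z ^ (n + 1) / ((n + 1 + 2).factorial : ℂ)
        = z * ∑' n : ℕ, z ^ n / ((n + 3).factorial : ℂ) := by
      rw [← tsum_mul_left]
      exact tsum_congr fun n => by
        have : n + 1 + 2 = n + 3 := by ring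
        rw [this, pow_succ]; ring
    rw [expAux, h2, h3]
    norm_num
  have hb : ∀ z : ℂ, ‖expAux z - 2⁻¹‖ ≤ ‖z‖ * Real.exp ‖z‖ := by
    intro z
    rw [key z, norm_mul]
    gcongr
    have hexp : Real.exp ‖z‖ = ∑' n : ℕ, ‖z‖ ^ n / (n.factorial : ℝ) := by
      rw [Real.exp_eq_exp_ℝ, NormedSpace.exp_eq_tsum_div]
    rw [hexp]
    refine tsum_of_norm_bounded (Real.summable_pow_div_factorial ‖z‖).hasSum fun n => ?_
    rw [norm_div, norm_pow]
    have h1 : ‖((n + 3).factorial : ℂ)‖ = ((n + 3).factorial : ℝ) := by simp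
    rw [h1]
    gcongr
    omega
  have h0 : Tendsto (fun z : ℂ => expAux z - 2⁻¹) (nhds 0) (nhds 0) := by
    apply squeeze_zero_norm hb
    have : Tendsto (fun z : ℂ => ‖z‖ * Real.exp ‖z‖) (nhds 0) (nhds (‖(0 : ℂ)‖ * Real.exp ‖(0 : ℂ)‖)) :=
      (continuous_norm.mul (Real.continuous_exp.comp continuous_norm)).tendsto 0
    simpa using this
  have := h0.add_const (2⁻¹ : ℂ)
  simpa using this

lemma key_limit :
    Tendsto (fun z : ℂ => (Complex.exp z - 1)⁻¹ - z⁻¹) (nhdsWithin 0 {0}ᶜ) (nhds (-(2⁻¹))) := by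
  have hden : Tendsto (fun z : ℂ => 1 + z * expAux z) (nhds 0) (nhds 1) := by
    have h : Tendsto (fun z : ℂ => z * expAux z) (nhds 0) (nhds (0 * 2⁻¹)) :=
      tendsto_id.mul tendsto_expAux
    have h2 : Tendsto (fun z : ℂ => 1 + z * expAux z) (nhds 0) (nhds (1 + 0 * 2⁻¹)) :=
      tendsto_const_nhds.add h
    simpa using h2
  have h1 : Tendsto (fun z : ℂ => -expAux z / (1 + z * expAux z)) (nhds 0) (nhds (-(2⁻¹))) := by
    have := tendsto_expAux.neg.div hden one_ne_zero
    rw [div_one] at this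
    exact this
  refine Filter.Tendsto.congr' ?_ (h1.mono_left nhdsWithin_le_nhds)
  have hne : ∀ᶠ z : ℂ in nhdsWithin 0 {0}ᶜ, 1 + z * expAux z ≠ 0 :=
    (hden.eventually_ne one_ne_zero).filter_mono nhdsWithin_le_nhds
  filter_upwards [hne, self_mem_nhdsWithin] with z h1z hz
  have hz0 : z ≠ 0 := hz
  have hexp : Complex.exp z - 1 = z * (1 + z * expAux z) := by rw [exp_eq_expAux]; ring
  rw [hexp]
  have h1z' : 1 + expAux z * z ≠ 0 := by rwa [mul_comm]
  field_simp
  ring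


theorem lucas_zeta_term_constant_term (a b : ℝ) (ha : 1 < a) (hb : |b| < a) (hb0 : 0 < |b|)
    (D : ℝ) (hD : D = (a - b) ^ 2) (hQ : 0 < a * b)
    (p q : ℕ) (hp : 0 < p) (hq : 0 < q) (hpq : Nat.Coprime p q)
    (hbval : b = a ^ (-(p / q : ℝ)))
    (k₁ k ℓ : ℕ) (hk₁ : 0 < k₁) (hk : k = q * k₁)
    (hℓ : (ℓ : ℝ) = k * (1 + (p : ℝ) / q))
    (Z : ℂ → ℂ)
    (hZ : ∀ s : ℂ, Z s = (D : ℂ) ^ (s / 2) * genBinomNeg s k * (-1) ^ k *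
      ((a : ℂ) ^ (-s - k) * (b : ℂ) ^ k) / (1 - (a : ℂ) ^ (-s - k) * (b : ℂ) ^ k)) :
    Filter.Tendsto
      (fun s : ℂ => Z s -
        (D : ℂ) ^ (-(ℓ : ℂ) / 2) * (ℓ.choose k) * (-1) ^ k / ((Real.log a : ℂ) * (s + ℓ)))
      (nhdsWithin (-(ℓ : ℂ)) {(-(ℓ : ℂ))}ᶜ)
      (nhds ((D : ℂ) ^ (-(ℓ : ℂ) / 2) * (ℓ.choose k) * (-1) ^ k *
        (((Real.log D - Real.log a) / (2 * Real.log a) : ℝ) +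
         (((harmonic (ℓ - k) : ℝ) - (harmonic ℓ : ℝ)) / Real.log a : ℝ)))) := by
  classical
  have ha0 : (0:ℝ) < a := lt_trans one_pos ha
  have hb' : (0:ℝ) < b := by nlinarith [abs_nonneg b, le_abs_self b]
  have hab : b < a := lt_of_le_of_lt (le_abs_self b) hb
  have hD0 : (0:ℝ) < D := by
    rw [hD]; have h1 : 0 < a - b := by linarith
    positivity
  have hL : (0:ℝ) < Real.log a := Real.log_pos ha
  set L : ℂ := (Real.log a : ℂ) with hLdef
  have hLne : L ≠ 0 := by
    simp only [hLdef, ne_eq, Complex.ofReal_eq_zero]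
    exact hL.ne'
  have hk0 : 0 < k := by rw [hk]; exact Nat.mul_pos hq hk₁
  have hq0R : (0:ℝ) < q := by exact_mod_cast hq
  have hkl : k ≤ ℓ := by
    have h1 : (k:ℝ) ≤ (ℓ:ℝ) := by
      rw [hℓ]
      have h2 : (0:ℝ) ≤ (p:ℝ)/q := by positivity
      nlinarith [Nat.cast_nonneg (α := ℝ) k]
    exact_mod_cast h1
  have hq0C : (q:ℂ) ≠ 0 := by exact_mod_cast hq.ne'
  have hℓC : (ℓ:ℂ) = (k:ℂ) * (1 + (p:ℂ)/(q:ℂ)) := by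
    have := congrArg (Complex.ofReal) hℓ
    push_cast at this ⊢
    exact this
  -- rewrite the exponential part
  have hA : ∀ s : ℂ, (a:ℂ) ^ (-s - (k:ℂ)) * (b:ℂ) ^ k = Complex.exp (-(L * (s + ℓ))) := by
    intro s
    have haC : (a:ℂ) ≠ 0 := by exact_mod_cast ha0.ne'
    rw [Complex.cpow_def_of_ne_zero haC]
    have hlog : Complex.log (a:ℂ) = L := by rw [hLdef, Complex.ofReal_log ha0.le]
    have hbexp : (b:ℂ) ^ k = Complex.exp ((k:ℂ) * (Real.log b : ℂ)) := by
      have h1 : (b:ℂ) = Complex.exp ((Real.log b : ℂ)) := by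
        rw [← Complex.ofReal_exp, Real.exp_log hb']
      rw [h1, ← Complex.exp_nat_mul]
    rw [hbexp, hlog, ← Complex.exp_add]
    congr 1
    have hlogb : (Real.log b : ℂ) = -((p:ℂ)/(q:ℂ)) * L := by
      rw [hbval, Real.log_rpow ha0]
      push_cast
      ring
    rw [hlogb, hℓC]
    field_simp
    ring
  -- the regular factor
  set P : ℂ → ℂ := fun s => (D:ℂ) ^ (s/2) * genBinomNeg s k * (-1)^k with hPdef
  have hZP : ∀ s : ℂ, Z s = P s * (Complex.exp (L * (s + ℓ)) - 1)⁻¹ := by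
    intro s
    rw [hZ s, hA s]
    set w := L * (s + ℓ) with hw
    have hne : Complex.exp (-w) ≠ 0 := Complex.exp_ne_zero _
    have h1 : 1 - Complex.exp (-w) = Complex.exp (-w) * (Complex.exp w - 1) := by
      rw [mul_sub, ← Complex.exp_add]
      simp
    rw [h1, hPdef, mul_div_assoc, div_mul_cancel_left₀ hne]
  -- product formula : descending factorial
  have hfac : ∏ j ∈ Finset.range k, ((ℓ:ℂ) - (j:ℂ)) = (ℓ.choose k : ℂ) * (k.factorial : ℂ) := by
    have h1 : ∏ j ∈ Finset.range k, ((ℓ:ℂ) - (j:ℂ)) = ((ℓ.descFactorial k : ℕ) : ℂ) := by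
      rw [Nat.descFactorial_eq_prod_range, Nat.cast_prod]
      refine Finset.prod_congr rfl fun i hi => ?_
      have hik : i ≤ ℓ := le_trans (Finset.mem_range.mp hi).le hkl
      rw [Nat.cast_sub hik]
    rw [h1, Nat.descFactorial_eq_factorial_mul_choose]
    push_cast
    ring
  have hne_j : ∀ j ∈ Finset.range k, ((ℓ:ℂ) - (j:ℂ)) ≠ 0 := by
    intro j hj
    have hjk : j < k := Finset.mem_range.mp hj
    have : (j:ℂ) ≠ (ℓ:ℂ) := by
      have : j ≠ ℓ := by omega
      exact_mod_cast this
    exact sub_ne_zero.2 (Ne.symm this)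
  have hkfac : (k.factorial : ℂ) ≠ 0 := by exact_mod_cast k.factorial_ne_zero
  -- value of genBinomNeg at -ℓ
  have hgb0 : genBinomNeg (-(ℓ:ℂ)) k = (ℓ.choose k : ℂ) := by
    rw [genBinomNeg]
    have h1 : ∏ j ∈ Finset.range k, (-(-(ℓ:ℂ)) - (j:ℂ)) = ∏ j ∈ Finset.range k, ((ℓ:ℂ) - (j:ℂ)) := by
      refine Finset.prod_congr rfl fun j _ => by ring
    rw [h1, hfac]
    field_simp
  -- derivative of genBinomNeg at -ℓ
  have hgb : HasDerivAt (fun s : ℂ => genBinomNeg s k)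
      (-((ℓ.choose k : ℂ) * ∑ j ∈ Finset.range k, ((ℓ:ℂ) - (j:ℂ))⁻¹)) (-(ℓ:ℂ)) := by
    have hfactors : ∀ j ∈ Finset.range k,
        HasDerivAt (fun s : ℂ => -s - (j:ℂ)) (-1 : ℂ) (-(ℓ:ℂ)) := by
      intro j _
      simpa using ((hasDerivAt_id (-(ℓ:ℂ))).neg.sub_const (j:ℂ))
    have h := (HasDerivAt.finset_prod hfactors).div_const (k.factorial : ℂ)
    have hfun : (fun s : ℂ => (∏ j ∈ Finset.range k, (-s - (j:ℂ))) / (k.factorial : ℂ))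
        = fun s : ℂ => genBinomNeg s k := rfl
    have hval : (∑ j ∈ Finset.range k,
          (∏ i ∈ (Finset.range k).erase j, (-(-(ℓ:ℂ)) - (i:ℂ))) • (-1 : ℂ)) / (k.factorial : ℂ)
        = -((ℓ.choose k : ℂ) * ∑ j ∈ Finset.range k, ((ℓ:ℂ) - (j:ℂ))⁻¹) := by
      have hterm : ∀ j ∈ Finset.range k,
          (∏ i ∈ (Finset.range k).erase j, (-(-(ℓ:ℂ)) - (i:ℂ))) • (-1 : ℂ)
          = -((ℓ.choose k : ℂ) * (k.factorial : ℂ) * ((ℓ:ℂ) - (j:ℂ))⁻¹) := by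
        intro j hj
        have h2 : ∏ i ∈ (Finset.range k).erase j, (-(-(ℓ:ℂ)) - (i:ℂ))
            = ∏ i ∈ (Finset.range k).erase j, ((ℓ:ℂ) - (i:ℂ)) :=
          Finset.prod_congr rfl fun i _ => by ring
        have h3 : ((ℓ:ℂ) - (j:ℂ)) * ∏ i ∈ (Finset.range k).erase j, ((ℓ:ℂ) - (i:ℂ))
            = (ℓ.choose k : ℂ) * (k.factorial : ℂ) := by
          rw [← hfac]
          exact Finset.mul_prod_erase (Finset.range k) (fun i : ℕ => (ℓ:ℂ) - (i:ℂ)) hj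
        have h4 : ∏ i ∈ (Finset.range k).erase j, ((ℓ:ℂ) - (i:ℂ))
            = (ℓ.choose k : ℂ) * (k.factorial : ℂ) * ((ℓ:ℂ) - (j:ℂ))⁻¹ :=
          (eq_mul_inv_iff_mul_eq₀ (hne_j j hj)).mpr (by linear_combination h3)
        rw [smul_eq_mul, h2, h4]
        ring
      rw [Finset.sum_congr rfl hterm, Finset.sum_neg_distrib, ← Finset.mul_sum]
      field_simp
    rw [hval] at h
    simp only [Finset.prod_apply] at h
    exact hfun ▸ h
  -- derivative of the cpow factor
  have hDC : (D:ℂ) ≠ 0 := by exact_mod_cast hD0.ne'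
  have hcpow : HasDerivAt (fun s : ℂ => (D:ℂ) ^ (s/2))
      ((D:ℂ) ^ ((-(ℓ:ℂ))/2) * (Real.log D : ℂ) * (1/2)) (-(ℓ:ℂ)) := by
    have hf : HasDerivAt (fun s : ℂ => s/2) ((1:ℂ)/2) (-(ℓ:ℂ)) := by
      simpa using (hasDerivAt_id (-(ℓ:ℂ))).div_const 2
    have h := hf.const_cpow (c := (D:ℂ)) (Or.inl hDC)
    have hlogD : Complex.log (D:ℂ) = (Real.log D : ℂ) := (Complex.ofReal_log hD0.le).symm
    rw [hlogD] at h
    exact h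
  -- derivative of P
  set S : ℂ := ∑ j ∈ Finset.range k, ((ℓ:ℂ) - (j:ℂ))⁻¹ with hSdef
  set Pd : ℂ := ((D:ℂ) ^ ((-(ℓ:ℂ))/2) * (Real.log D : ℂ) * (1/2) * (ℓ.choose k : ℂ)
      + (D:ℂ) ^ ((-(ℓ:ℂ))/2) * (-((ℓ.choose k : ℂ) * S))) * (-1:ℂ)^k with hPd
  have hP : HasDerivAt P Pd (-(ℓ:ℂ)) := by
    have h := (hcpow.mul hgb).mul_const ((-1:ℂ)^k)
    rw [hPdef, hPd]
    rw [hgb0] at h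
    exact h
  -- harmonic sums
  have hHsum : S = ((harmonic ℓ : ℚ) : ℂ) - ((harmonic (ℓ - k) : ℚ) : ℂ) := by
    have h1 : ((harmonic ℓ : ℚ) : ℂ) - ((harmonic (ℓ - k) : ℚ) : ℂ)
        = ∑ i ∈ Finset.Ico (ℓ - k) ℓ, ((i:ℂ) + 1)⁻¹ := by
      rw [Finset.sum_Ico_eq_sub _ (Nat.sub_le ℓ k)]
      simp only [harmonic]
      push_cast
      ring
    rw [h1, Finset.sum_Ico_eq_sum_range]
    have hklk : ℓ - (ℓ - k) = k := by omega
    rw [hklk, hSdef, ← Finset.sum_range_reflect (fun j => ((ℓ:ℂ) - (j:ℂ))⁻¹) k]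
    refine Finset.sum_congr rfl fun i hi => ?_
    have hik : i < k := Finset.mem_range.mp hi
    have hle : k - 1 - i ≤ ℓ := by omega
    have hnat : ℓ - (k - 1 - i) = ℓ - k + i + 1 := by omega
    rw [← Nat.cast_sub hle, hnat]
    push_cast
    ring
  -- values of things at -ℓ
  have hPval : P (-(ℓ:ℂ)) = (D:ℂ) ^ (-(ℓ:ℂ)/2) * (ℓ.choose k : ℂ) * (-1:ℂ)^k := by
    rw [hPdef]
    simp only
    rw [hgb0]
  -- the map s ↦ L(s+ℓ) into the punctured neighbourhood of 0
  have hzmap : Tendsto (fun s : ℂ => L * (s + (ℓ:ℂ))) (nhdsWithin (-(ℓ:ℂ)) {(-(ℓ:ℂ))}ᶜ)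
      (nhdsWithin 0 {0}ᶜ) := by
    apply tendsto_nhdsWithin_of_tendsto_nhds_of_eventually_within
    · have h : Tendsto (fun s : ℂ => L * (s + (ℓ:ℂ))) (nhds (-(ℓ:ℂ)))
          (nhds (L * ((-(ℓ:ℂ)) + (ℓ:ℂ)))) :=
        (continuous_const.mul (continuous_id.add continuous_const)).tendsto _
      simp only [neg_add_cancel, mul_zero] at h
      exact h.mono_left nhdsWithin_le_nhds
    · filter_upwards [self_mem_nhdsWithin] with s hs
      simp only [Set.mem_compl_iff, Set.mem_singleton_iff] at hs ⊢
      intro hcon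
      rcases mul_eq_zero.mp hcon with h | h
      · exact hLne h
      · exact hs (by linear_combination h)
  -- main limits
  have T1 : Tendsto (fun s : ℂ => P s * ((Complex.exp (L * (s + (ℓ:ℂ))) - 1)⁻¹ - (L * (s + (ℓ:ℂ)))⁻¹))
      (nhdsWithin (-(ℓ:ℂ)) {(-(ℓ:ℂ))}ᶜ) (nhds (P (-(ℓ:ℂ)) * (-(2⁻¹)))) := by
    have hPt : Tendsto P (nhdsWithin (-(ℓ:ℂ)) {(-(ℓ:ℂ))}ᶜ) (nhds (P (-(ℓ:ℂ)))) :=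
      (hP.continuousAt.tendsto).mono_left nhdsWithin_le_nhds
    exact hPt.mul (key_limit.comp hzmap)
  have T2 : Tendsto (fun s : ℂ => slope P (-(ℓ:ℂ)) s * L⁻¹)
      (nhdsWithin (-(ℓ:ℂ)) {(-(ℓ:ℂ))}ᶜ) (nhds (Pd * L⁻¹)) :=
    (hasDerivAt_iff_tendsto_slope.mp hP).mul_const _
  have Total := T1.add T2
  have hvalue : P (-(ℓ:ℂ)) * (-(2⁻¹)) + Pd * L⁻¹
      = (D : ℂ) ^ (-(ℓ : ℂ) / 2) * (ℓ.choose k) * (-1) ^ k *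
        (((Real.log D - Real.log a) / (2 * Real.log a) : ℝ) +
         (((harmonic (ℓ - k) : ℝ) - (harmonic ℓ : ℝ)) / Real.log a : ℝ)) := by
    rw [hPval, hPd, hHsum]
    push_cast
    rw [hLdef]
    have hLR : (Real.log a : ℝ) ≠ 0 := hL.ne'
    have hLC : (Real.log a : ℂ) ≠ 0 := by exact_mod_cast hLR
    field_simp
    ring
  rw [← hvalue]
  refine Filter.Tendsto.congr' ?_ Total
  filter_upwards [self_mem_nhdsWithin] with s hs
  have hs' : s ≠ -(ℓ:ℂ) := hs
  have ht : s + (ℓ:ℂ) ≠ 0 := fun h => hs' (by linear_combination h)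
  rw [hZP s, slope_def_field, hPval, sub_neg_eq_add]
  field_simp
  ring
end
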